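/- Let T > 0 and let V : ℝⁿ → ℝⁿ be Lipschitz continuous. Then for every p ∈ ℕ* there exists C₁ > 0 such that for all (θ,x) ∈ [0,T]×ℝⁿ, E[1 + ‖Ψ₄^V(G_θ,x)‖^{2p}] ≤ exp(C₁θ)(1 + ‖x‖^{2p}), where G_θ is a centered real Gaussian random variable with variance θ. -/

import Mathlib

set_option maxHeartbeats 1000000

open MeasureTheory ProbabilityTheory Real Finset

noncomputable section

/-- Euclidean space ℝⁿ. -/
abbrev Vec (n : ℕ) : Type := EuclideanSpace ℝ (Fin n)

/-- Classical fourth-order Runge–Kutta map `Ψ₄^V`. -/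
def rk4 {n : ℕ} (V : Vec n → Vec n) (θ : ℝ) (x : Vec n) : Vec n :=
  x + (θ / 6) • (V x + (2 : ℝ) • V (x + (θ / 2) • V x)
    + (2 : ℝ) • V (x + (θ / 2) • V (x + (θ / 2) • V x))
    + V (x + θ • V (x + (θ / 2) • V (x + (θ / 2) • V x))))

lemma aux_one_add_pow_le {s : ℝ} (hs : 0 ≤ s) (m : ℕ) :
    (1 + s) ^ m ≤ 2 ^ m * (1 + s ^ m) := by
  rcases le_total s 1 with h | h
  · calc (1+s)^m ≤ 2^m := by
          apply pow_le_pow_left₀ (by linarith) (by linarith)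
      _ ≤ 2^m * (1 + s^m) := by
          nlinarith [pow_pos (by norm_num : (0:ℝ) < 2) m, pow_nonneg hs m]
  · calc (1+s)^m ≤ (2*s)^m := by
          apply pow_le_pow_left₀ (by linarith) (by linarith)
      _ = 2^m * s^m := by rw [mul_pow]
      _ ≤ 2^m * (1 + s^m) := by
          have := pow_pos (by norm_num : (0:ℝ) < 2) m
          nlinarith [pow_nonneg hs m]
/-- Binomial upper bound with second-order remainder. -/
lemma aux_pow_add_le (A u : ℝ) (hA : 0 ≤ A) (p : ℕ) :
    (A + u) ^ p ≤ A ^ p + p * A ^ (p - 1) * u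
      + (p : ℝ) * (p - 1 : ℕ) * u ^ 2 * (A + |u|) ^ (p - 2) := by
  rcases lt_or_ge p 2 with h2 | h2
  · interval_cases p
    · simp
    · simp
  · obtain ⟨P, rfl⟩ : ∃ P, p = P + 2 := ⟨p - 2, by omega⟩
    have hexp := add_pow A u (P + 2)
    rw [Finset.sum_range_succ, Finset.sum_range_succ] at hexp
    have e1 : (P+2) - (P+1) = 1 := by omega
    have e2 : (P+2) - (P+2) = 0 := by omega
    rw [e1, e2, Nat.choose_self, Nat.choose_succ_self_right] at hexp
    -- hexp : (A+u)^(P+2) = (∑ k in range (P+1), A^k * u^(P+2-k) * C(P+2,k)) + A^(P+1) * u^1 * (P+2) + A^(P+2) * u^0 * 1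
    have hT : |∑ k ∈ Finset.range (P+1), A ^ k * u ^ ((P+2) - k) * ((P+2).choose k : ℝ)|
        ≤ ((P+2):ℝ) * (P+1) * u ^ 2 * (A + |u|) ^ P := by
      calc |∑ k ∈ Finset.range (P+1), A ^ k * u ^ ((P+2) - k) * ((P+2).choose k : ℝ)|
          ≤ ∑ k ∈ Finset.range (P+1), |A ^ k * u ^ ((P+2) - k) * ((P+2).choose k : ℝ)| :=
            Finset.abs_sum_le_sum_abs _ _
        _ ≤ ∑ k ∈ Finset.range (P+1), ((P+2):ℝ) * (P+1) * u^2 * (A^k * |u|^(P-k) * ((P).choose k : ℝ)) := by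
            apply Finset.sum_le_sum
            intro k hk
            have hkP : k ≤ P := by simpa using Nat.lt_succ_iff.mp (Finset.mem_range.mp hk)
            have hsub : (P+2) - k = (P - k) + 2 := by omega
            have habs : |A ^ k * u ^ ((P+2) - k) * ((P+2).choose k : ℝ)|
                = A ^ k * |u| ^ ((P - k) + 2) * ((P+2).choose k : ℝ) := by
              rw [hsub, abs_mul, abs_mul, abs_pow, abs_pow, abs_of_nonneg hA,
                Nat.abs_cast]
            rw [habs]
            have hchoose : ((P+2).choose k : ℝ) ≤ ((P+2):ℝ) * (P+1) * (P.choose k : ℝ) := by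
              have i1 := Nat.choose_mul_succ_eq (P+1) k
              have i2 := Nat.choose_mul_succ_eq P k
              -- i1 : C(P+1,k) * (P+2) = C(P+2,k) * (P+2-k)
              -- i2 : C(P,k) * (P+1) = C(P+1,k) * (P+1-k)
              have key : (P+2).choose k * ((P+2) - k) * ((P+1) - k) = (P+2) * (P+1) * P.choose k := by
                calc (P+2).choose k * ((P+2) - k) * ((P+1) - k)
                    = ((P+1).choose k * (P+2)) * ((P+1) - k) := by rw [← i1]
                  _ = ((P+1).choose k * ((P+1) - k)) * (P+2) := by ring
                  _ = (P.choose k * (P+1)) * (P+2) := by rw [← i2]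
                  _ = (P+2) * (P+1) * P.choose k := by ring
              have hle : (P+2).choose k ≤ (P+2) * (P+1) * P.choose k := by
                calc (P+2).choose k ≤ (P+2).choose k * ((P+2) - k) :=
                      Nat.le_mul_of_pos_right _ (by omega)
                  _ ≤ (P+2).choose k * ((P+2) - k) * ((P+1) - k) :=
                      Nat.le_mul_of_pos_right _ (by omega)
                  _ = _ := key
              exact_mod_cast Nat.cast_le.mpr hle
            have hpow : |u| ^ ((P - k) + 2) = |u| ^ (P - k) * u ^ 2 := by
              rw [pow_add, sq_abs]
            rw [hpow]
            calc A ^ k * (|u| ^ (P - k) * u ^ 2) * ((P+2).choose k : ℝ)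
                ≤ A ^ k * (|u| ^ (P - k) * u ^ 2) * (((P+2):ℝ) * (P+1) * (P.choose k : ℝ)) := by
                  apply mul_le_mul_of_nonneg_left hchoose
                  positivity
              _ = ((P+2):ℝ) * (P+1) * u^2 * (A^k * |u|^(P-k) * ((P).choose k : ℝ)) := by ring
        _ = ((P+2):ℝ) * (P+1) * u^2 * ∑ k ∈ Finset.range (P+1), A^k * |u|^(P-k) * ((P).choose k : ℝ) := by
            rw [Finset.mul_sum]
        _ = ((P+2):ℝ) * (P+1) * u^2 * (A + |u|) ^ P := by rw [← add_pow]
    have hsimp : ((P + 2 : ℕ) : ℝ) * ((P + 2 - 1 : ℕ) : ℝ) = ((P+2):ℝ) * (P+1) := by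
      norm_num
    have e3 : (P + 2) - 1 = P + 1 := by omega
    have e4 : (P + 2) - 2 = P := by omega
    rw [e3, e4]
    push_cast
    push_cast at hexp hT
    nlinarith [abs_nonneg (∑ k ∈ Finset.range (P+1), A ^ k * u ^ ((P+2) - k) * ((P+2).choose k : ℝ)), neg_abs_le (∑ k ∈ Finset.range (P+1), A ^ k * u ^ ((P+2) - k) * ((P+2).choose k : ℝ)), le_abs_self (∑ k ∈ Finset.range (P+1), A ^ k * u ^ ((P+2) - k) * ((P+2).choose k : ℝ))]
lemma aux_integrable_pow_gauss (m : ℕ) :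
    Integrable (fun z : ℝ => z ^ m) (gaussianReal 0 1) := by
  rw [gaussianReal_of_var_ne_zero 0 one_ne_zero,
    integrable_withDensity_iff (measurable_gaussianPDF 0 1)
      (Filter.Eventually.of_forall fun x => ENNReal.ofReal_lt_top)]
  have hpdf : ∀ x : ℝ, ((gaussianPDF 0 1 x).toReal : ℝ) = gaussianPDFReal 0 1 x := by
    intro x
    rw [ProbabilityTheory.gaussianPDF_def]
    exact ENNReal.toReal_ofReal (gaussianPDFReal_nonneg 0 1 x)
  set D : ℝ := 2^m * (1 + 4^m * (m.factorial : ℝ)) * (Real.sqrt (2*π))⁻¹ with hD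
  apply Integrable.mono' ((integrable_exp_neg_mul_sq (show (0:ℝ) < 1/4 by norm_num)).const_mul D)
  · exact ((measurable_id.pow_const m).mul (measurable_gaussianPDF 0 1).ennreal_toReal).aestronglyMeasurable
  · refine Filter.Eventually.of_forall fun x => ?_
    rw [norm_mul, norm_pow, hpdf]
    have hpdfval : gaussianPDFReal 0 1 x = (Real.sqrt (2*π))⁻¹ * Real.exp (-x^2/2) := by
      rw [ProbabilityTheory.gaussianPDFReal_def]
      norm_num
    have hsqrt : (0:ℝ) < Real.sqrt (2*π) := Real.sqrt_pos.mpr (by positivity)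
    have h1 : |x| ^ m ≤ 2^m * (1 + x^(2*m)) := by
      calc |x| ^ m ≤ (1 + x^2) ^ m := by
            apply pow_le_pow_left₀ (abs_nonneg x)
            nlinarith [sq_abs x, sq_nonneg (|x| - 1)]
        _ ≤ 2^m * (1 + (x^2)^m) := aux_one_add_pow_le (by positivity) m
        _ = 2^m * (1 + x^(2*m)) := by rw [← pow_mul]
    have h2 : x^(2*m) ≤ 4^m * (m.factorial : ℝ) * Real.exp (x^2/4) := by
      have hterm : (x^2/4)^m / (m.factorial : ℝ) ≤ Real.exp (x^2/4) := by
        calc (x^2/4)^m / (m.factorial : ℝ)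
            ≤ ∑ i ∈ Finset.range (m+1), (x^2/4)^i / (i.factorial : ℝ) := by
              exact Finset.single_le_sum (f := fun i => (x ^ 2 / 4) ^ i / (i.factorial : ℝ))
                (fun i _ => by positivity) (Finset.self_mem_range_succ m)
          _ ≤ Real.exp (x^2/4) := Real.sum_le_exp_of_nonneg (by positivity) (m+1)
      have hfac : (0:ℝ) < (m.factorial : ℝ) := by exact_mod_cast m.factorial_pos
      have : (x^2/4)^m = x^(2*m) / 4^m := by
        rw [div_pow, ← pow_mul]
      rw [this] at hterm
      rw [div_le_iff₀ hfac, div_le_iff₀ (by positivity : (0:ℝ) < 4^m)] at hterm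
      nlinarith [hterm]
    have hexp1 : (1:ℝ) ≤ Real.exp (x^2/4) := by
      rw [Real.one_le_exp_iff]; positivity
    have h3 : |x| ^ m ≤ 2^m * (1 + 4^m * (m.factorial : ℝ)) * Real.exp (x^2/4) := by
      calc |x| ^ m ≤ 2^m * (1 + x^(2*m)) := h1
        _ ≤ 2^m * (1 + 4^m * (m.factorial : ℝ) * Real.exp (x^2/4)) := by
            nlinarith [pow_pos (show (0:ℝ) < 2 by norm_num) m]
        _ ≤ 2^m * (1 + 4^m * (m.factorial : ℝ)) * Real.exp (x^2/4) := by
            have h4 : (0:ℝ) < 2^m := by positivity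
            have h5 : (0:ℝ) ≤ 4^m * (m.factorial : ℝ) := by positivity
            nlinarith [Real.exp_pos (x^2/4)]
    rw [hpdfval, Real.norm_eq_abs, Real.norm_eq_abs,
      abs_of_nonneg (by positivity : (0:ℝ) ≤ (Real.sqrt (2*π))⁻¹ * Real.exp (-x^2/2))]
    have hcomb : Real.exp (x^2/4) * Real.exp (-x^2/2) = Real.exp (-(1/4) * x^2) := by
      rw [← Real.exp_add]; ring_nf
    calc |x| ^ m * ((Real.sqrt (2*π))⁻¹ * Real.exp (-x^2/2))
        ≤ (2^m * (1 + 4^m * (m.factorial : ℝ)) * Real.exp (x^2/4)) * ((Real.sqrt (2*π))⁻¹ * Real.exp (-x^2/2)) := by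
          apply mul_le_mul_of_nonneg_right h3
          positivity
      _ = D * (Real.exp (x^2/4) * Real.exp (-x^2/2)) := by rw [hD]; ring
      _ = D * Real.exp (-(1/4) * x^2) := by rw [hcomb]
lemma aux_gauss_map {θ : ℝ} (hθ : 0 ≤ θ) :
    Measure.map (fun z : ℝ => Real.sqrt θ * z) (gaussianReal 0 1) = gaussianReal 0 θ.toNNReal := by
  rw [gaussianReal_map_const_mul (Real.sqrt θ)]
  congr 1
  · rw [mul_zero]
  · ext
    push_cast
    rw [Real.sq_sqrt hθ, mul_one, Real.coe_toNNReal θ hθ]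
lemma aux_gauss_neg :
    Measure.map (fun z : ℝ => -z) (gaussianReal 0 1) = gaussianReal 0 1 := by
  have h := gaussianReal_map_const_mul (μ := 0) (v := 1) (-1)
  have hfun : (fun x : ℝ => (-1 : ℝ) * x) = fun x : ℝ => -x := by
    funext x; ring
  rw [hfun] at h
  rw [h]
  congr 1
  · rw [mul_zero]
  · ext; push_cast; norm_num
lemma aux_step {c t P X w : ℝ} (hwdef : w = c * (1 + t)) (hc : 1 ≤ c) (ht : 0 ≤ t)
    (hX : 0 ≤ X) (hP : 1 ≤ P) : c * (X + t * (P * X)) ≤ w * P * X := by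
  subst hwdef
  nlinarith [mul_nonneg (mul_nonneg (show (0:ℝ) ≤ c by linarith) hX)
    (show (0:ℝ) ≤ P - 1 by linarith), mul_nonneg (mul_nonneg (mul_nonneg
    (show (0:ℝ) ≤ c by linarith) ht) hX) (show (0:ℝ) ≤ P - 1 by linarith)]
lemma aux_rk4_bounds {n : ℕ} (V : Vec n → Vec n) (c : ℝ) (hc : 1 ≤ c)
    (hV : ∀ y, ‖V y‖ ≤ c * (1 + ‖y‖)) (hVL : ∀ y z, ‖V y - V z‖ ≤ c * ‖y - z‖)
    (g : ℝ) (x : Vec n) :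
    ‖rk4 V g x - x‖ ≤ |g| * (c * (1 + |g|)) ^ 4 * (1 + ‖x‖) ∧
    ‖rk4 V g x - x - g • V x‖ ≤ |g| ^ 2 * (c * (1 + |g|)) ^ 4 * (1 + ‖x‖) := by
  set t : ℝ := |g| with htdef
  set X : ℝ := 1 + ‖x‖ with hXdef
  set w : ℝ := c * (1 + t) with hwdef
  have ht : 0 ≤ t := abs_nonneg g
  have hc0 : 0 ≤ c := by linarith
  have hX1 : 1 ≤ X := by rw [hXdef]; linarith [norm_nonneg x]
  have hX0 : 0 ≤ X := by linarith
  have hw : 1 ≤ w := by rw [hwdef]; nlinarith [mul_nonneg hc0 ht]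
  have hw0 : 0 ≤ w := by linarith
  have hcw : c ≤ w := by rw [hwdef]; nlinarith [mul_nonneg hc0 ht]
  have habs2 : |g/2| = t/2 := by rw [htdef, abs_div]; norm_num
  have habs6 : |g/6| = t/6 := by rw [htdef, abs_div]; norm_num
  clear_value t X w
  set k1 : Vec n := V x with hk1def
  set k2 : Vec n := V (x + (g/2) • k1) with hk2def
  set k3 : Vec n := V (x + (g/2) • k2) with hk3def
  set k4 : Vec n := V (x + g • k3) with hk4def
  have hrk : rk4 V g x = x + (g/6) • (k1 + (2:ℝ) • k2 + (2:ℝ) • k3 + k4) := rfl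
  clear_value k1 k2 k3 k4
  -- stage bounds
  have hk1 : ‖k1‖ ≤ w * X := by
    calc ‖k1‖ ≤ c * (1 + ‖x‖) := by rw [hk1def]; exact hV x
      _ = c * X := by rw [hXdef]
      _ ≤ w * X := mul_le_mul_of_nonneg_right hcw hX0
  have hk2 : ‖k2‖ ≤ w^2 * X := by
    have harg : ‖x + (g/2) • k1‖ ≤ ‖x‖ + t/2 * ‖k1‖ := by
      calc ‖x + (g/2) • k1‖ ≤ ‖x‖ + ‖(g/2) • k1‖ := norm_add_le _ _
        _ = ‖x‖ + t/2 * ‖k1‖ := by rw [norm_smul, Real.norm_eq_abs, habs2]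
    have h1 : t/2 * ‖k1‖ ≤ t * (w * X) := by
      have h2 := mul_le_mul_of_nonneg_left hk1 (show (0:ℝ) ≤ t/2 by linarith)
      have h3 : 0 ≤ t * (w * X) := mul_nonneg ht (mul_nonneg hw0 hX0)
      nlinarith [h2, h3]
    calc ‖k2‖ ≤ c * (1 + ‖x + (g/2) • k1‖) := by rw [hk2def]; exact hV _
      _ ≤ c * (X + t * (w * X)) := by
          apply mul_le_mul_of_nonneg_left _ hc0
          linarith [harg, h1, hXdef.le, hXdef.ge]
      _ ≤ w * w * X := aux_step hwdef hc ht hX0 hw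
      _ = w^2 * X := by ring
  have hk3 : ‖k3‖ ≤ w^3 * X := by
    have harg : ‖x + (g/2) • k2‖ ≤ ‖x‖ + t/2 * ‖k2‖ := by
      calc ‖x + (g/2) • k2‖ ≤ ‖x‖ + ‖(g/2) • k2‖ := norm_add_le _ _
        _ = ‖x‖ + t/2 * ‖k2‖ := by rw [norm_smul, Real.norm_eq_abs, habs2]
    have hw2 : 1 ≤ w^2 := one_le_pow₀ hw
    have h1 : t/2 * ‖k2‖ ≤ t * (w^2 * X) := by
      have h2 := mul_le_mul_of_nonneg_left hk2 (show (0:ℝ) ≤ t/2 by linarith)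
      have h3 : 0 ≤ t * (w^2 * X) := mul_nonneg ht (mul_nonneg (by positivity) hX0)
      nlinarith [h2, h3]
    calc ‖k3‖ ≤ c * (1 + ‖x + (g/2) • k2‖) := by rw [hk3def]; exact hV _
      _ ≤ c * (X + t * (w^2 * X)) := by
          apply mul_le_mul_of_nonneg_left _ hc0
          linarith [harg, h1, hXdef.le, hXdef.ge]
      _ ≤ w * w^2 * X := aux_step hwdef hc ht hX0 hw2
      _ = w^3 * X := by ring
  have hk4 : ‖k4‖ ≤ w^4 * X := by
    have harg : ‖x + g • k3‖ ≤ ‖x‖ + t * ‖k3‖ := by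
      calc ‖x + g • k3‖ ≤ ‖x‖ + ‖g • k3‖ := norm_add_le _ _
        _ = ‖x‖ + t * ‖k3‖ := by rw [norm_smul, Real.norm_eq_abs, ← htdef]
    have hw3 : 1 ≤ w^3 := one_le_pow₀ hw
    have h1 : t * ‖k3‖ ≤ t * (w^3 * X) := mul_le_mul_of_nonneg_left hk3 ht
    calc ‖k4‖ ≤ c * (1 + ‖x + g • k3‖) := by rw [hk4def]; exact hV _
      _ ≤ c * (X + t * (w^3 * X)) := by
          apply mul_le_mul_of_nonneg_left _ hc0
          linarith [harg, h1, hXdef.le, hXdef.ge]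
      _ ≤ w * w^3 * X := aux_step hwdef hc ht hX0 hw3
      _ = w^4 * X := by ring
  -- power comparisons
  have hw14 : w ≤ w^4 := by
    calc w = w^1 := (pow_one w).symm
      _ ≤ w^4 := pow_le_pow_right₀ hw (by norm_num)
  have hw24 : w^2 ≤ w^4 := pow_le_pow_right₀ hw (by norm_num)
  have hw34 : w^3 ≤ w^4 := pow_le_pow_right₀ hw (by norm_num)
  have hw04 : 0 ≤ w^4 := by positivity
  -- difference bounds
  have hd2 : ‖k2 - k1‖ ≤ t * w^2 * X := by
    have s1 : ‖k2 - k1‖ ≤ c * ‖(x + (g/2) • k1) - x‖ := by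
      rw [hk2def, hk1def]; exact hVL _ _
    rw [add_sub_cancel_left, norm_smul, Real.norm_eq_abs, habs2] at s1
    have s2 : t/2 * ‖k1‖ ≤ t/2 * (w * X) :=
      mul_le_mul_of_nonneg_left hk1 (by linarith)
    have s3 : c * (t/2 * (w * X)) ≤ w * (t/2 * (w * X)) :=
      mul_le_mul_of_nonneg_right hcw (by positivity)
    have s4 : c * (t/2 * ‖k1‖) ≤ c * (t/2 * (w * X)) :=
      mul_le_mul_of_nonneg_left s2 hc0
    linarith [s1, s3, s4, mul_nonneg (mul_nonneg ht (mul_nonneg hw0 hw0)) hX0]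
  have hd3 : ‖k3 - k1‖ ≤ t * w^3 * X := by
    have s1 : ‖k3 - k1‖ ≤ c * ‖(x + (g/2) • k2) - x‖ := by
      rw [hk3def, hk1def]; exact hVL _ _
    rw [add_sub_cancel_left, norm_smul, Real.norm_eq_abs, habs2] at s1
    have s2 : t/2 * ‖k2‖ ≤ t/2 * (w^2 * X) :=
      mul_le_mul_of_nonneg_left hk2 (by linarith)
    have s3 : c * (t/2 * (w^2 * X)) ≤ w * (t/2 * (w^2 * X)) :=
      mul_le_mul_of_nonneg_right hcw (by positivity)
    have s4 : c * (t/2 * ‖k2‖) ≤ c * (t/2 * (w^2 * X)) :=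
      mul_le_mul_of_nonneg_left s2 hc0
    linarith [s1, s3, s4, mul_nonneg (mul_nonneg ht (mul_nonneg (mul_nonneg hw0 hw0) hw0)) hX0]
  have hd4 : ‖k4 - k1‖ ≤ t * w^4 * X := by
    have s1 : ‖k4 - k1‖ ≤ c * ‖(x + g • k3) - x‖ := by
      rw [hk4def, hk1def]; exact hVL _ _
    rw [add_sub_cancel_left, norm_smul, Real.norm_eq_abs, ← htdef] at s1
    have s2 : t * ‖k3‖ ≤ t * (w^3 * X) := mul_le_mul_of_nonneg_left hk3 ht
    have s3 : c * (t * (w^3 * X)) ≤ w * (t * (w^3 * X)) :=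
      mul_le_mul_of_nonneg_right hcw (by positivity)
    have s4 : c * (t * ‖k3‖) ≤ c * (t * (w^3 * X)) :=
      mul_le_mul_of_nonneg_left s2 hc0
    linarith [s1, s3, s4]
  constructor
  · have h1 : ‖k1 + (2:ℝ) • k2 + (2:ℝ) • k3 + k4‖
        ≤ ‖k1‖ + 2 * ‖k2‖ + 2 * ‖k3‖ + ‖k4‖ := by
      calc ‖k1 + (2:ℝ) • k2 + (2:ℝ) • k3 + k4‖
          ≤ ‖k1 + (2:ℝ) • k2 + (2:ℝ) • k3‖ + ‖k4‖ := norm_add_le _ _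
        _ ≤ ‖k1 + (2:ℝ) • k2‖ + ‖(2:ℝ) • k3‖ + ‖k4‖ := by
            linarith [norm_add_le (k1 + (2:ℝ) • k2) ((2:ℝ) • k3)]
        _ ≤ ‖k1‖ + ‖(2:ℝ) • k2‖ + ‖(2:ℝ) • k3‖ + ‖k4‖ := by
            linarith [norm_add_le k1 ((2:ℝ) • k2)]
        _ = ‖k1‖ + 2 * ‖k2‖ + 2 * ‖k3‖ + ‖k4‖ := by
            rw [norm_smul, norm_smul, Real.norm_eq_abs]; norm_num
    have hS : ‖k1 + (2:ℝ) • k2 + (2:ℝ) • k3 + k4‖ ≤ 6 * (w^4 * X) := by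
      have b1 : w * X ≤ w^4 * X := mul_le_mul_of_nonneg_right hw14 hX0
      have b2 : w^2 * X ≤ w^4 * X := mul_le_mul_of_nonneg_right hw24 hX0
      have b3 : w^3 * X ≤ w^4 * X := mul_le_mul_of_nonneg_right hw34 hX0
      linarith
    rw [hrk, add_sub_cancel_left, norm_smul, Real.norm_eq_abs, habs6]
    calc t/6 * ‖k1 + (2:ℝ) • k2 + (2:ℝ) • k3 + k4‖
        ≤ t/6 * (6 * (w^4 * X)) := mul_le_mul_of_nonneg_left hS (by linarith)
      _ = t * w^4 * X := by ring
  · have hid : x + (g/6) • (k1 + (2:ℝ) • k2 + (2:ℝ) • k3 + k4) - x - g • k1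
        = (g/6) • ((2:ℝ) • (k2 - k1) + (2:ℝ) • (k3 - k1) + (k4 - k1)) := by
      module
    rw [hrk, hid, norm_smul, Real.norm_eq_abs, habs6]
    have hS2 : ‖(2:ℝ) • (k2 - k1) + (2:ℝ) • (k3 - k1) + (k4 - k1)‖
        ≤ 2 * ‖k2 - k1‖ + 2 * ‖k3 - k1‖ + ‖k4 - k1‖ := by
      calc ‖(2:ℝ) • (k2 - k1) + (2:ℝ) • (k3 - k1) + (k4 - k1)‖
          ≤ ‖(2:ℝ) • (k2 - k1) + (2:ℝ) • (k3 - k1)‖ + ‖k4 - k1‖ := norm_add_le _ _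
        _ ≤ ‖(2:ℝ) • (k2 - k1)‖ + ‖(2:ℝ) • (k3 - k1)‖ + ‖k4 - k1‖ := by
            linarith [norm_add_le ((2:ℝ) • (k2 - k1)) ((2:ℝ) • (k3 - k1))]
        _ = 2 * ‖k2 - k1‖ + 2 * ‖k3 - k1‖ + ‖k4 - k1‖ := by
            rw [norm_smul, norm_smul, Real.norm_eq_abs]; norm_num
    have h5 : ‖(2:ℝ) • (k2 - k1) + (2:ℝ) • (k3 - k1) + (k4 - k1)‖ ≤ 5 * (t * w^4 * X) := by
      have b2 : t * w^2 * X ≤ t * w^4 * X :=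
        mul_le_mul_of_nonneg_right (mul_le_mul_of_nonneg_left hw24 ht) hX0
      have b3 : t * w^3 * X ≤ t * w^4 * X :=
        mul_le_mul_of_nonneg_right (mul_le_mul_of_nonneg_left hw34 ht) hX0
      linarith
    calc t/6 * ‖(2:ℝ) • (k2 - k1) + (2:ℝ) • (k3 - k1) + (k4 - k1)‖
        ≤ t/6 * (5 * (t * w^4 * X)) := mul_le_mul_of_nonneg_left h5 (by linarith)
      _ ≤ t^2 * w^4 * X := by nlinarith [mul_nonneg (mul_nonneg (mul_nonneg ht ht) hw04) hX0]
lemma aux_sym_bound {n : ℕ} (V : Vec n → Vec n) (c : ℝ) (hc : 1 ≤ c)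
    (hV : ∀ y, ‖V y‖ ≤ c * (1 + ‖y‖)) (hVL : ∀ y z, ‖V y - V z‖ ≤ c * ‖y - z‖)
    (p : ℕ) (hp : 1 ≤ p) (g : ℝ) (x : Vec n) :
    (1 + ‖rk4 V g x‖ ^ (2*p)) + (1 + ‖rk4 V (-g) x‖ ^ (2*p)) ≤
      2 * (1 + ‖x‖^(2*p)) +
      (((6*p + 18*p^2*4^p : ℝ) * c^(18+10*p) * 2^(18+10*p) * 2^(2*p))
        * (g^2 + g^(20+10*p))) * (1 + ‖x‖^(2*p)) := by
  have hb := aux_rk4_bounds V c hc hV hVL g x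
  have hb' := aux_rk4_bounds V c hc hV hVL (-g) x
  rw [abs_neg] at hb'
  set M : ℕ := 18 + 10*p with hMdef
  set t : ℝ := |g| with htdef
  set X : ℝ := 1 + ‖x‖ with hXdef
  set w : ℝ := c * (1 + t) with hwdef
  have ht : 0 ≤ t := abs_nonneg g
  have hc0 : 0 ≤ c := by linarith only [hc]
  have hX1 : 1 ≤ X := by rw [hXdef]; linarith only [norm_nonneg x]
  have hX0 : 0 ≤ X := by linarith only [hX1]
  have hw : 1 ≤ w := by
    rw [hwdef]
    calc (1:ℝ) = 1*1 := by norm_num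
      _ ≤ c*(1+t) := mul_le_mul hc (by linarith only [ht]) (by norm_num) hc0
  have hw0 : 0 ≤ w := by linarith only [hw]
  have htw : t ≤ w := by
    rw [hwdef]
    have h1 : (1+t) ≤ c*(1+t) := le_mul_of_one_le_left (by linarith only [ht]) hc
    linarith only [h1]
  have hgt : t^2*(1+t^M) = g^2 + g^(20+10*p) := by
    have h1 : t^2 * t^M = t^(20+10*p) := by
      rw [← pow_add]; congr 1; omega
    have h2 : t^(20+10*p) = g^(20+10*p) := by
      rw [htdef]; exact Even.pow_abs ⟨10+5*p, by ring⟩ g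
    have h3 : t^2 = g^2 := by rw [htdef, sq_abs]
    calc t^2*(1+t^M) = t^2 + t^2*t^M := by ring
      _ = g^2 + g^(20+10*p) := by rw [h1, h2, h3]
  set h : Vec n := rk4 V g x - x with hhdef
  set h' : Vec n := rk4 V (-g) x - x with hh'def
  have hxh : rk4 V g x = x + h := by rw [hhdef]; abel
  have hxh' : rk4 V (-g) x = x + h' := by rw [hh'def]; abel
  have hbh : ‖h‖ ≤ t * w^4 * X := hb.1
  have hbh' : ‖h'‖ ≤ t * w^4 * X := hb'.1
  have hbE : ‖h - g • V x‖ ≤ t^2 * w^4 * X := hb.2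
  have hbE' : ‖h' + g • V x‖ ≤ t^2 * w^4 * X := by
    have := hb'.2
    rw [neg_smul, sub_neg_eq_add] at this
    exact this
  clear_value t X w h h'
  clear hb hb'
  set A : ℝ := ‖x‖^2 with hAdef
  set Y : ℝ := X^2 with hYdef
  set u : ℝ := 2*(inner ℝ x h : ℝ) + ‖h‖^2 with hudef
  set u' : ℝ := 2*(inner ℝ x h' : ℝ) + ‖h'‖^2 with hu'def
  have hA0 : 0 ≤ A := by rw [hAdef]; positivity
  have hY0 : 0 ≤ Y := by rw [hYdef]; positivity
  have hAY : A ≤ Y := by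
    rw [hAdef, hYdef]
    apply pow_le_pow_left₀ (norm_nonneg x)
    rw [hXdef]; linarith only []
  have hnorm : ‖rk4 V g x‖^(2*p) = (A+u)^p := by
    rw [hxh, pow_mul, norm_add_sq_real, hudef, hAdef]; ring_nf
  have hnorm' : ‖rk4 V (-g) x‖^(2*p) = (A+u')^p := by
    rw [hxh', pow_mul, norm_add_sq_real, hu'def, hAdef]; ring_nf
  have hAp : A^p = ‖x‖^(2*p) := by rw [hAdef, ← pow_mul]
  have hYX : X * X = Y := by rw [hYdef]; ring
  have hinu : u = 2*(inner ℝ x h : ℝ) + ‖h‖^2 := hudef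
  have hinu' : u' = 2*(inner ℝ x h' : ℝ) + ‖h'‖^2 := hu'def
  clear_value A Y u u'
  have hApY : A^(p-1) ≤ Y^(p-1) := pow_le_pow_left₀ hA0 hAY _
  -- |u| bounds
  have habs_bound : ∀ (v : ℝ) (z : Vec n), v = 2*(inner ℝ x z : ℝ) + ‖z‖^2 →
      ‖z‖ ≤ t * w^4 * X → |v| ≤ 3*t*w^9*Y := by
    intro v z hvdef hz
    have i1 : |(inner ℝ x z : ℝ)| ≤ ‖x‖ * ‖z‖ := abs_real_inner_le_norm x z
    have i2 : ‖x‖ * ‖z‖ ≤ X * (t*w^4*X) :=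
      mul_le_mul (by rw [hXdef]; linarith only []) hz (norm_nonneg z) hX0
    have i3 : ‖z‖^2 ≤ (t*w^4*X)^2 := pow_le_pow_left₀ (norm_nonneg z) hz 2
    have i4 : |v| ≤ 2*(‖x‖*‖z‖) + ‖z‖^2 := by
      rw [hvdef]
      calc |2*(inner ℝ x z : ℝ) + ‖z‖^2| ≤ |2*(inner ℝ x z : ℝ)| + |‖z‖^2| := abs_add_le _ _
        _ = 2*|(inner ℝ x z : ℝ)| + ‖z‖^2 := by
            rw [abs_mul, abs_of_nonneg (by positivity : (0:ℝ) ≤ ‖z‖^2)]; norm_num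
        _ ≤ 2*(‖x‖*‖z‖) + ‖z‖^2 := by linarith only [i1, mul_le_mul_of_nonneg_left i1 (by norm_num : (0:ℝ) ≤ 2)]
    have i5 : X*(t*w^4*X) = t*w^4*Y := by rw [← hYX]; ring
    have i6 : (t*w^4*X)^2 = t^2*w^8*Y := by rw [hYdef]; ring
    have i7 : t^2*w^8 ≤ t*w^9 := by
      have := mul_le_mul_of_nonneg_left
        (mul_le_mul_of_nonneg_right htw (by positivity : (0:ℝ) ≤ w^8)) ht
      linarith only [this]
    have i8 : t*w^4 ≤ t*w^9 := by
      have hw49 : w^4 ≤ w^9 := pow_le_pow_right₀ hw (by norm_num)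
      exact mul_le_mul_of_nonneg_left hw49 ht
    linarith only [i2, i3, i4, i5, i6, mul_le_mul_of_nonneg_right i7 hY0,
      mul_le_mul_of_nonneg_right i8 hY0]
  have habsu : |u| ≤ 3*t*w^9*Y := habs_bound u h hinu hbh
  have habsu' : |u'| ≤ 3*t*w^9*Y := habs_bound u' h' hinu' hbh'
  -- |u+u'| bound
  have huu' : |u+u'| ≤ 6*t^2*w^8*Y := by
    have j0 : h + h' = (h - g • V x) + (h' + g • V x) := by abel
    have j1 : ‖h + h'‖ ≤ 2*(t^2*w^4*X) := by
      rw [j0]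
      calc ‖(h - g • V x) + (h' + g • V x)‖ ≤ ‖h - g • V x‖ + ‖h' + g • V x‖ := norm_add_le _ _
        _ ≤ 2*(t^2*w^4*X) := by linarith only [hbE, hbE']
    have j2 : u + u' = 2*(inner ℝ x (h + h') : ℝ) + (‖h‖^2 + ‖h'‖^2) := by
      rw [hinu, hinu', inner_add_right]; ring
    have j3 : |(inner ℝ x (h + h') : ℝ)| ≤ ‖x‖ * ‖h + h'‖ := abs_real_inner_le_norm _ _
    have j4 : ‖x‖ * ‖h + h'‖ ≤ X * (2*(t^2*w^4*X)) :=
      mul_le_mul (by rw [hXdef]; linarith only []) j1 (norm_nonneg _) hX0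
    have j5 : |u + u'| ≤ 2*(‖x‖*‖h+h'‖) + (‖h‖^2 + ‖h'‖^2) := by
      rw [j2]
      calc |2*(inner ℝ x (h + h') : ℝ) + (‖h‖^2 + ‖h'‖^2)|
          ≤ |2*(inner ℝ x (h + h') : ℝ)| + |‖h‖^2 + ‖h'‖^2| := abs_add_le _ _
        _ = 2*|(inner ℝ x (h + h') : ℝ)| + (‖h‖^2 + ‖h'‖^2) := by
            rw [abs_mul, abs_of_nonneg (by positivity : (0:ℝ) ≤ ‖h‖^2 + ‖h'‖^2)]; norm_num
        _ ≤ 2*(‖x‖*‖h+h'‖) + (‖h‖^2 + ‖h'‖^2) := by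
            linarith only [mul_le_mul_of_nonneg_left j3 (by norm_num : (0:ℝ) ≤ 2)]
    have i3 : ‖h‖^2 ≤ (t*w^4*X)^2 := pow_le_pow_left₀ (norm_nonneg h) hbh 2
    have i3' : ‖h'‖^2 ≤ (t*w^4*X)^2 := pow_le_pow_left₀ (norm_nonneg h') hbh' 2
    have i6 : (t*w^4*X)^2 = t^2*w^8*Y := by rw [hYdef]; ring
    have j6 : X * (2*(t^2*w^4*X)) = 2*t^2*w^4*Y := by rw [← hYX]; ring
    have j7 : t^2*w^4*Y ≤ t^2*w^8*Y := by
      have hww : w^4 ≤ w^8 := pow_le_pow_right₀ hw (by norm_num)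
      have := mul_le_mul_of_nonneg_right
        (mul_le_mul_of_nonneg_left hww (by positivity : (0:ℝ) ≤ t^2)) hY0
      linarith only [this]
    linarith only [j4, j5, i3, i3', i6, j6, j7]
  -- remainder bounds
  have hrem : ∀ v : ℝ, |v| ≤ 3*t*w^9*Y →
      (p:ℝ) * ((p-1 : ℕ) : ℝ) * v^2 * (A + |v|)^(p-2) ≤ 18*p^2*4^p*t^2*w^M*Y^p / 2 := by
    intro v hv
    have hRnn : (0:ℝ) ≤ 18*(p:ℝ)^2*4^p*t^2*w^M*Y^p / 2 := by
      apply div_nonneg _ (by norm_num)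
      exact mul_nonneg (mul_nonneg (mul_nonneg
        (by positivity : (0:ℝ) ≤ 18*(p:ℝ)^2*4^p) (sq_nonneg t))
        (pow_nonneg hw0 M)) (pow_nonneg hY0 p)
    rcases Nat.lt_or_ge p 2 with hp2 | hp2
    · have hp1 : p = 1 := by omega
      subst hp1
      simp only [Nat.sub_self, Nat.cast_zero, mul_zero, zero_mul]
      simpa using hRnn
    · have hw10 : (1:ℝ) ≤ 4*w^10 := by linarith only [one_le_pow₀ hw (n := 10)]
      have hAv0 : (0:ℝ) ≤ A + |v| := add_nonneg hA0 (abs_nonneg v)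
      have hAu : A + |v| ≤ 4*w^10*Y := by
        have b1 : Y ≤ w^10*Y := le_mul_of_one_le_left hY0 (one_le_pow₀ hw)
        have b2 : (t*w^9)*Y ≤ (w*w^9)*Y :=
          mul_le_mul_of_nonneg_right (mul_le_mul_of_nonneg_right htw (by positivity)) hY0
        linarith only [hAY, hv, b1, b2]
      have hpow : (A+|v|)^(p-2) ≤ (4*w^10)^(p-2) * Y^(p-2) := by
        calc (A+|v|)^(p-2) ≤ (4*w^10*Y)^(p-2) :=
              pow_le_pow_left₀ hAv0 hAu _
          _ = (4*w^10)^(p-2) * Y^(p-2) := mul_pow _ _ _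
      have hv2 : v^2 ≤ 9*t^2*w^18*Y^2 := by
        have hvv := pow_le_pow_left₀ (abs_nonneg v) hv 2
        rw [sq_abs] at hvv
        linarith only [hvv]
      have e1 : v^2*(A+|v|)^(p-2) ≤ (9*t^2*w^18*Y^2) * ((4*w^10)^(p-2) * Y^(p-2)) :=
        mul_le_mul hv2 hpow (pow_nonneg hAv0 _)
          (mul_nonneg (mul_nonneg (by positivity) (pow_nonneg hw0 18)) (sq_nonneg Y))
      have e3 : Y^2*Y^(p-2) = Y^p := by rw [← pow_add]; congr 1; omega
      have e4 : w^18*(w^10)^(p-2) = w^(18+10*(p-2)) := by rw [← pow_mul, ← pow_add]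
      have e5 : w^(18+10*(p-2)) ≤ w^M := pow_le_pow_right₀ hw (by rw [hMdef]; omega)
      have e6 : (4:ℝ)^(p-2) ≤ 4^p := pow_le_pow_right₀ (by norm_num) (by omega)
      have e2 : (9*t^2*w^18*Y^2) * ((4*w^10)^(p-2) * Y^(p-2))
          = 9*t^2*(4^(p-2) : ℝ) * w^(18+10*(p-2)) * Y^p := by
        rw [mul_pow, ← e3, ← e4]; ring
      have e7 : 9*t^2*(4^(p-2) : ℝ) * w^(18+10*(p-2)) * Y^p ≤ 9*t^2*(4^p : ℝ) * w^M * Y^p := by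
        have q1 : 9*t^2*(4^(p-2) : ℝ) ≤ 9*t^2*(4^p : ℝ) := by
          have := mul_le_mul_of_nonneg_left e6 (by positivity : (0:ℝ) ≤ 9*t^2)
          linarith only [this]
        have n1 : (0:ℝ) ≤ Y^p := pow_nonneg hY0 p
        have n2 : (0:ℝ) ≤ w^(18+10*(p-2)) := pow_nonneg hw0 _
        exact mul_le_mul_of_nonneg_right
          (mul_le_mul q1 e5 n2 (by positivity)) n1
      have hpp : (p:ℝ) * ((p-1 : ℕ) : ℝ) ≤ (p:ℝ)^2 := by
        have h1 : ((p-1 : ℕ) : ℝ) ≤ (p:ℝ) := by exact_mod_cast Nat.cast_le.mpr (Nat.sub_le p 1)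
        have h2 := mul_le_mul_of_nonneg_left h1 (Nat.cast_nonneg (α := ℝ) p)
        calc (p:ℝ) * ((p-1 : ℕ) : ℝ) ≤ (p:ℝ)*(p:ℝ) := h2
          _ = (p:ℝ)^2 := (pow_two _).symm
      have e8 : v^2*(A+|v|)^(p-2) ≤ 9*t^2*(4^p : ℝ) * w^M * Y^p := by
        calc v^2*(A+|v|)^(p-2) ≤ (9*t^2*w^18*Y^2) * ((4*w^10)^(p-2) * Y^(p-2)) := e1
          _ = 9*t^2*(4^(p-2) : ℝ) * w^(18+10*(p-2)) * Y^p := e2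
          _ ≤ 9*t^2*(4^p : ℝ) * w^M * Y^p := e7
      have hnn : (0:ℝ) ≤ v^2*(A+|v|)^(p-2) :=
        mul_nonneg (sq_nonneg v) (pow_nonneg hAv0 _)
      calc (p:ℝ) * ((p-1 : ℕ) : ℝ) * v^2 * (A + |v|)^(p-2)
          = ((p:ℝ) * ((p-1 : ℕ) : ℝ)) * (v^2 * (A + |v|)^(p-2)) := by ring
        _ ≤ (p:ℝ)^2 * (9*t^2*(4^p : ℝ) * w^M * Y^p) := by
            apply mul_le_mul hpp e8 hnn (by positivity)
        _ = 18*p^2*4^p*t^2*w^M*Y^p / 2 := by ring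
  -- linear term
  have hlin : (p:ℝ)*A^(p-1)*u + (p:ℝ)*A^(p-1)*u' ≤ 6*p*t^2*w^M*Y^p := by
    have l1 : (p:ℝ)*A^(p-1)*u + (p:ℝ)*A^(p-1)*u' = ((p:ℝ)*A^(p-1))*(u+u') := by ring
    have l2 : ((p:ℝ)*A^(p-1))*(u+u') ≤ ((p:ℝ)*A^(p-1))*|u+u'| :=
      mul_le_mul_of_nonneg_left (le_abs_self _)
        (mul_nonneg (Nat.cast_nonneg (α := ℝ) p) (pow_nonneg hA0 _))
    have l3 : A^(p-1)*|u+u'| ≤ Y^(p-1)*(6*t^2*w^8*Y) :=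
      mul_le_mul hApY huu' (abs_nonneg _) (pow_nonneg hY0 _)
    have hYY : Y^(p-1)*Y = Y^p := by
      rw [← pow_succ]; congr 1; omega
    have l4 : Y^(p-1)*(6*t^2*w^8*Y) = 6*t^2*w^8*Y^p := by rw [← hYY]; ring
    have l5 : 6*t^2*w^8*Y^p ≤ 6*t^2*w^M*Y^p := by
      have hww : w^8 ≤ w^M := pow_le_pow_right₀ hw (by rw [hMdef]; omega)
      exact mul_le_mul_of_nonneg_right
        (mul_le_mul_of_nonneg_left hww (by positivity : (0:ℝ) ≤ 6*t^2))
        (pow_nonneg hY0 p)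
    have l6 : ((p:ℝ)*A^(p-1))*|u+u'| ≤ (p:ℝ)*(6*t^2*w^M*Y^p) := by
      have lm := mul_le_mul_of_nonneg_left (l3.trans (l4.le.trans l5))
        (Nat.cast_nonneg (α := ℝ) p)
      calc ((p:ℝ)*A^(p-1))*|u+u'| = (p:ℝ)*(A^(p-1)*|u+u'|) := by ring
        _ ≤ (p:ℝ)*(6*t^2*w^M*Y^p) := lm
    calc (p:ℝ)*A^(p-1)*u + (p:ℝ)*A^(p-1)*u' = ((p:ℝ)*A^(p-1))*(u+u') := l1
      _ ≤ ((p:ℝ)*A^(p-1))*|u+u'| := l2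
      _ ≤ (p:ℝ)*(6*t^2*w^M*Y^p) := l6
      _ = 6*p*t^2*w^M*Y^p := by ring
  -- assemble
  have hb1 := aux_pow_add_le A u hA0 p
  have hb2 := aux_pow_add_le A u' hA0 p
  have hr1 := hrem u habsu
  have hr2 := hrem u' habsu'
  have hS : (A+u)^p + (A+u')^p ≤ 2*A^p + (6*p + 18*p^2*4^p)*(t^2*w^M*Y^p) := by
    linarith only [hb1, hb2, hr1, hr2, hlin]
  -- convert w^M, Y^p, and t powers
  have hwM : w^M ≤ c^M*(2^M*(1+t^M)) := by
    rw [hwdef, mul_pow]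
    apply mul_le_mul_of_nonneg_left (aux_one_add_pow_le ht M) (pow_nonneg hc0 M)
  have hYp : Y^p ≤ 2^(2*p)*(1+‖x‖^(2*p)) := by
    have hyx : Y^p = X^(2*p) := by rw [hYdef, ← pow_mul]
    rw [hyx, hXdef]
    exact aux_one_add_pow_le (norm_nonneg x) (2*p)
  have hfin : (6*(p:ℝ) + 18*p^2*4^p)*(t^2*w^M*Y^p) ≤
      (((6*p + 18*p^2*4^p : ℝ) * c^M * 2^M * 2^(2*p)) * (g^2 + g^(20+10*p))) * (1 + ‖x‖^(2*p)) := by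
    have c1 : (0:ℝ) ≤ 6*(p:ℝ) + 18*p^2*4^p := by positivity
    have hD : (0:ℝ) ≤ t^2*(c^M*(2^M*(1+t^M))) :=
      mul_nonneg (sq_nonneg t) (mul_nonneg (pow_nonneg hc0 M)
        (mul_nonneg (by positivity) (add_nonneg zero_le_one (pow_nonneg ht M))))
    have step : t^2*w^M*Y^p ≤ t^2*(c^M*(2^M*(1+t^M)))*(2^(2*p)*(1+‖x‖^(2*p))) :=
      mul_le_mul (mul_le_mul_of_nonneg_left hwM (sq_nonneg t)) hYp
        (pow_nonneg hY0 p) hD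
    calc (6*(p:ℝ) + 18*p^2*4^p)*(t^2*w^M*Y^p)
        ≤ (6*(p:ℝ) + 18*p^2*4^p)*(t^2*(c^M*(2^M*(1+t^M)))*(2^(2*p)*(1+‖x‖^(2*p)))) :=
          mul_le_mul_of_nonneg_left step c1
      _ = ((6*(p:ℝ) + 18*p^2*4^p) * c^M * 2^M * 2^(2*p)) * ((t^2*(1+t^M)) * (1+‖x‖^(2*p))) := by
          ring
      _ = (((6*p + 18*p^2*4^p : ℝ) * c^M * 2^M * 2^(2*p)) * (g^2 + g^(20+10*p))) * (1 + ‖x‖^(2*p)) := by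
          rw [hgt]; ring
  rw [hnorm, hnorm']
  linarith only [hS, hfin, hAp.le, hAp.ge]

/-- moment-type growth bound for the fourth-order Runge–Kutta map
evaluated at a centered Gaussian time of variance `θ`. -/
theorem rk4_gaussian_growth {n : ℕ} (T : ℝ) (hT : 0 < T) (V : Vec n → Vec n)
    (hLip : ∃ L : NNReal, LipschitzWith L V) :
    ∀ p : ℕ, 1 ≤ p → ∃ C₁ : ℝ, 0 < C₁ ∧
      ∀ θ ∈ Set.Icc (0 : ℝ) T, ∀ x : Vec n,
        ∫ g : ℝ, (1 + ‖rk4 V g x‖ ^ (2 * p)) ∂(gaussianReal 0 (Real.toNNReal θ)) ≤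
          Real.exp (C₁ * θ) * (1 + ‖x‖ ^ (2 * p)) := by
  obtain ⟨L, hLip⟩ := hLip
  have hVc : Continuous V := hLip.continuous
  set c : ℝ := ‖V 0‖ + (L : ℝ) + 1 with hcdef
  have hc : 1 ≤ c := by
    rw [hcdef]; linarith [norm_nonneg (V 0), L.coe_nonneg]
  have hc0 : 0 ≤ c := by linarith
  have hVL : ∀ y z : Vec n, ‖V y - V z‖ ≤ c * ‖y - z‖ := by
    intro y z
    have h0 := hLip.dist_le_mul y z
    rw [dist_eq_norm, dist_eq_norm] at h0
    have : (L:ℝ) * ‖y - z‖ ≤ c * ‖y - z‖ := by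
      apply mul_le_mul_of_nonneg_right _ (norm_nonneg _)
      rw [hcdef]; linarith [norm_nonneg (V 0)]
    linarith
  have hV : ∀ y : Vec n, ‖V y‖ ≤ c * (1 + ‖y‖) := by
    intro y
    have h1 : ‖V y‖ ≤ ‖V 0‖ + ‖V y - V 0‖ := by
      calc ‖V y‖ = ‖V 0 + (V y - V 0)‖ := by rw [add_sub_cancel]
        _ ≤ ‖V 0‖ + ‖V y - V 0‖ := norm_add_le _ _
    have h2 : ‖V y - V 0‖ ≤ c * ‖y - 0‖ := hVL y 0
    rw [sub_zero] at h2
    have h3 : ‖V 0‖ ≤ c := by rw [hcdef]; linarith [L.coe_nonneg]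
    nlinarith [norm_nonneg y, norm_nonneg (V y)]
  intro p hp
  set m2 : ℕ := 20 + 10*p with hm2def
  have hm2even : Even m2 := ⟨10 + 5*p, by rw [hm2def]; ring⟩
  set K : ℝ := (6*p + 18*p^2*4^p : ℝ) * c^(18+10*p) * 2^(18+10*p) * 2^(2*p) with hKdef
  have hK0 : 0 ≤ K := by
    rw [hKdef]
    apply mul_nonneg (mul_nonneg (mul_nonneg (by positivity) (pow_nonneg hc0 _)) (by positivity))
      (by positivity)
  set ν : Measure ℝ := gaussianReal 0 1 with hνdef
  set I2 : ℝ := ∫ z, z^2 ∂ν with hI2def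
  set Im : ℝ := ∫ z, z^m2 ∂ν with hImdef
  have hI20 : 0 ≤ I2 := integral_nonneg fun z => sq_nonneg z
  have hIm0 : 0 ≤ Im := integral_nonneg fun z => hm2even.pow_nonneg z
  clear_value c m2 K I2 Im
  refine ⟨K * (I2 + T^(9+5*p) * Im) + 1, ?_, ?_⟩
  · have hprod : 0 ≤ K * (I2 + T^(9+5*p) * Im) :=
      mul_nonneg hK0 (add_nonneg hI20 (mul_nonneg (pow_nonneg hT.le _) hIm0))
    linarith
  intro θ hθ x
  obtain ⟨hθ0, hθT⟩ := hθ
  set s : ℝ := Real.sqrt θ with hsdef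
  have hs0 : 0 ≤ s := Real.sqrt_nonneg θ
  have hs2 : s^2 = θ := Real.sq_sqrt hθ0
  set N : ℝ := ‖x‖^(2*p) with hNdef
  have hN0 : 0 ≤ N := by rw [hNdef]; positivity
  set F : ℝ → ℝ := fun g => 1 + ‖rk4 V g x‖^(2*p) with hFdef
  have hF0 : ∀ g, 0 ≤ F g := fun g => by rw [hFdef]; positivity
  -- continuity of F
  have hrkcont : Continuous fun g : ℝ => rk4 V g x := by
    unfold rk4
    have h0 : Continuous fun g : ℝ => (g/2) := continuous_id.div_const 2
    have ha1 : Continuous fun g : ℝ => x + (g/2) • V x :=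
      continuous_const.add (h0.smul continuous_const)
    have hk2 : Continuous fun g : ℝ => V (x + (g/2) • V x) := hVc.comp ha1
    have ha2 : Continuous fun g : ℝ => x + (g/2) • V (x + (g/2) • V x) :=
      continuous_const.add (h0.smul hk2)
    have hk3 : Continuous fun g : ℝ => V (x + (g/2) • V (x + (g/2) • V x)) := hVc.comp ha2
    have ha3 : Continuous fun g : ℝ => x + g • V (x + (g/2) • V (x + (g/2) • V x)) :=
      continuous_const.add (continuous_id.smul hk3)
    have hk4 : Continuous fun g : ℝ =>
        V (x + g • V (x + (g/2) • V (x + (g/2) • V x))) := hVc.comp ha3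
    exact continuous_const.add (((continuous_id.div_const 6).smul
      (((continuous_const.add (hk2.const_smul (2:ℝ))).add (hk3.const_smul (2:ℝ))).add hk4)))
  have hFcont : Continuous F := by
    rw [hFdef]
    exact continuous_const.add ((hrkcont.norm).pow _)
  -- pointwise symmetrized bound
  have hsym : ∀ g : ℝ, F g + F (-g) ≤ 2*(1+N) + (K*(g^2 + g^m2))*(1+N) := by
    intro g
    have := aux_sym_bound V c hc hV hVL p hp g x
    rw [hFdef, hNdef, hKdef, hm2def]
    exact this
  clear_value s N F
  -- canonical-form bound function
  set C2 : ℝ := K*(1+N)*s^2 with hC2def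
  set Cm : ℝ := K*(1+N)*s^m2 with hCmdef
  set B : ℝ → ℝ := fun z => (1+N) + (C2*z^2 + Cm*z^m2) with hBdef
  clear_value C2 Cm B
  have hBpt : ∀ z : ℝ, F (s*z) + F (-(s*z)) ≤ 2 * B z := by
    intro z
    have h1 := hsym (s*z)
    have h2 : (s*z)^2 = s^2*z^2 := mul_pow s z 2
    have h3 : (s*z)^m2 = s^m2*z^m2 := mul_pow s z m2
    have h4 : (K*((s*z)^2 + (s*z)^m2))*(1+N) = 2*((C2*z^2 + Cm*z^m2)/2) := by
      rw [h2, h3, hC2def, hCmdef]; ring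
    rw [hBdef]
    calc F (s*z) + F (-(s*z)) ≤ 2*(1+N) + (K*((s*z)^2 + (s*z)^m2))*(1+N) := h1
      _ = 2*((1+N) + (C2*z^2 + Cm*z^m2)/2) := by rw [h4]; ring
      _ ≤ 2*((1+N) + (C2*z^2 + Cm*z^m2)) := by
          have hC20 : 0 ≤ C2 := by
            rw [hC2def]
            exact mul_nonneg (mul_nonneg hK0 (by linarith)) (sq_nonneg s)
          have hCm0 : 0 ≤ Cm := by
            rw [hCmdef]
            exact mul_nonneg (mul_nonneg hK0 (by linarith)) (pow_nonneg hs0 m2)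
          have hz2 : 0 ≤ C2*z^2 := mul_nonneg hC20 (sq_nonneg z)
          have hzm : 0 ≤ Cm*z^m2 := mul_nonneg hCm0 (hm2even.pow_nonneg z)
          linarith
  have hIntB : Integrable B ν := by
    rw [hBdef]
    exact (integrable_const _).add
      (((aux_integrable_pow_gauss 2).const_mul C2).add
        ((aux_integrable_pow_gauss m2).const_mul Cm))
  -- integrability of F∘(s·) and F∘(-(s·))
  have hmeasF : ∀ a : ℝ, AEStronglyMeasurable (fun z => F (a*z)) ν :=
    fun a => (hFcont.comp (continuous_const.mul continuous_id)).aestronglyMeasurable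
  have hIntF : Integrable (fun z => F (s*z)) ν := by
    apply Integrable.mono' (hIntB.const_mul 2) (hmeasF s)
    refine Filter.Eventually.of_forall fun z => ?_
    rw [Real.norm_eq_abs, abs_of_nonneg (hF0 _)]
    have := hBpt z
    have := hF0 (-(s*z))
    linarith
  have hIntF' : Integrable (fun z => F (-(s*z))) ν := by
    have heq : (fun z : ℝ => F (-(s*z))) = fun z => F ((-s)*z) := by
      funext z; rw [neg_mul]
    rw [heq]
    apply Integrable.mono' (hIntB.const_mul 2) (hmeasF (-s))
    refine Filter.Eventually.of_forall fun z => ?_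
    rw [Real.norm_eq_abs, abs_of_nonneg (hF0 _)]
    have h1 := hBpt z
    have h2 := hF0 (s*z)
    have h3 : (-s)*z = -(s*z) := neg_mul s z
    rw [h3]
    linarith
  -- the main chain
  have hmap : Measure.map (fun z : ℝ => s * z) ν = gaussianReal 0 θ.toNNReal := by
    rw [hsdef, hνdef]; exact aux_gauss_map hθ0
  have step1 : ∫ g : ℝ, F g ∂(gaussianReal 0 θ.toNNReal) = ∫ z, F (s*z) ∂ν := by
    rw [← hmap]
    exact integral_map (measurable_id.const_mul s).aemeasurable
      (hFcont.aestronglyMeasurable)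
  have hneg : ∫ z, F (s*z) ∂ν = ∫ z, F (-(s*z)) ∂ν := by
    rw [hνdef]
    conv_lhs => rw [← aux_gauss_neg]
    rw [integral_map measurable_neg.aemeasurable]
    · congr 1; funext z; rw [mul_neg]
    · rw [aux_gauss_neg]; exact hmeasF s
  have step2 : ∫ z, F (s*z) ∂ν = ∫ z, (F (s*z) + F (-(s*z)))/2 ∂ν := by
    rw [integral_div, integral_add hIntF hIntF', ← hneg]; ring
  have step3 : ∫ z, (F (s*z) + F (-(s*z)))/2 ∂ν ≤ ∫ z, B z ∂ν := by
    apply integral_mono ((hIntF.add hIntF').div_const 2) hIntB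
    intro z
    have := hBpt z
    simp only [Pi.add_apply]
    linarith [hBpt z]
  have step4 : ∫ z, B z ∂ν = (1+N) + (C2*I2 + Cm*Im) := by
    have hint2 : Integrable (fun z : ℝ => C2*z^2) ν := (aux_integrable_pow_gauss 2).const_mul C2
    have hintm : Integrable (fun z : ℝ => Cm*z^m2) ν := (aux_integrable_pow_gauss m2).const_mul Cm
    have hintsum : Integrable (fun z : ℝ => C2*z^2 + Cm*z^m2) ν := hint2.add hintm
    have hprob : IsProbabilityMeasure ν := by rw [hνdef]; infer_instance
    rw [hBdef]
    rw [integral_add (integrable_const _) hintsum, integral_add hint2 hintm,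
      integral_const_mul, integral_const_mul, integral_const]
    simp [hI2def, hImdef]
  -- bound the moments
  have hsm2 : s^m2 ≤ θ * T^(9+5*p) := by
    have e1 : s^m2 = (s^2)^(10+5*p) := by
      rw [← pow_mul]; congr 1; rw [hm2def]; ring
    have e2 : (s^2)^(10+5*p) = θ^(10+5*p) := by rw [hs2]
    have e3 : θ^(10+5*p) = θ * θ^(9+5*p) := by
      rw [← pow_succ']
      congr 1
      omega
    have e4 : θ^(9+5*p) ≤ T^(9+5*p) := pow_le_pow_left₀ hθ0 hθT _
    calc s^m2 = θ * θ^(9+5*p) := by rw [e1, e2, e3]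
      _ ≤ θ * T^(9+5*p) := mul_le_mul_of_nonneg_left e4 hθ0
  have hfinal : (1+N) + (C2*I2 + Cm*Im) ≤ (1 + (K * (I2 + T^(9+5*p) * Im) + 1)*θ) * (1+N) := by
    have f1 : C2*I2 = (K*(1+N))*(θ*I2) := by rw [hC2def, hs2]; ring
    have f2 : Cm*Im ≤ (K*(1+N))*((θ*T^(9+5*p))*Im) := by
      rw [hCmdef]
      have := mul_le_mul_of_nonneg_right hsm2 hIm0
      have hKN : 0 ≤ K*(1+N) := mul_nonneg hK0 (by linarith)
      calc K*(1+N)*s^m2*Im = (K*(1+N))*(s^m2*Im) := by ring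
        _ ≤ (K*(1+N))*((θ*T^(9+5*p))*Im) := mul_le_mul_of_nonneg_left this hKN
    have f3 : (K*(1+N))*(θ*I2) + (K*(1+N))*((θ*T^(9+5*p))*Im)
        = (K * (I2 + T^(9+5*p) * Im))*θ*(1+N) := by ring
    have f4 : 0 ≤ θ*(1+N) := mul_nonneg hθ0 (by linarith)
    nlinarith [f1, f2, f3, f4]
  have hexp : (1 + (K * (I2 + T^(9+5*p) * Im) + 1)*θ) * (1+N) ≤
      Real.exp ((K * (I2 + T^(9+5*p) * Im) + 1) * θ) * (1+N) := by
    apply mul_le_mul_of_nonneg_right _ (by linarith)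
    have := Real.add_one_le_exp ((K * (I2 + T^(9+5*p) * Im) + 1) * θ)
    linarith
  calc (∫ g : ℝ, F g ∂(gaussianReal 0 θ.toNNReal))
      = ∫ z, F (s*z) ∂ν := step1
    _ = ∫ z, (F (s*z) + F (-(s*z)))/2 ∂ν := step2
    _ ≤ ∫ z, B z ∂ν := step3
    _ = (1+N) + (C2*I2 + Cm*Im) := step4
    _ ≤ (1 + (K * (I2 + T^(9+5*p) * Im) + 1)*θ) * (1+N) := hfinal
    _ ≤ Real.exp ((K * (I2 + T^(9+5*p) * Im) + 1) * θ) * (1+N) := hexp
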